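/- Let v : (0, ∞) → ℝ be continuous and A : (0, ∞) → ℝ twice continuously differentiable with A″(x) = v(x)A(x) for all x > 0, and define k(x, t) = (A(x)A′(t) − A′(x)A(t))/(π(x − t)) for x ≠ t. Assume: (i) for all x ≠ t > 0 the function u ↦ A(u + x)·(v(u + x) − v(u + t))·A(u + t) is Lebesgue integrable on (0, ∞), with the integrability locally uniform as required in (10.8); and (ii) for each fixed η ≠ 0, k((ζ + η)/2, (ζ − η)/2) → 0 as ζ → +∞. Then for all x ≠ t > 0: k(x, t) = ∫₀^∞ A(u + x)·((v(u + x) − v(u + t))/(π(x − t)))·A(u + t) du. -/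

import Mathlib

/-- Corollary 10.4 (formula (10.12)): under an integrability condition and the
decay condition `k((ζ+η)/2, (ζ-η)/2) → 0` as `ζ → +∞`, the
Christoffel–Darboux type kernel of a solution of `A'' = vA` on `(0, ∞)` has
the integral representation
`k(x,t) = ∫₀^∞ A(u+x)·((v(u+x) - v(u+t))/(π(x - t)))·A(u+t) du`. -/
theorem stmt_17 (v A A' A'' : ℝ → ℝ)
    (hv : ContinuousOn v (Set.Ioi 0))
    (hderiv1 : ∀ x ∈ Set.Ioi (0 : ℝ), HasDerivAt A (A' x) x)
    (hderiv2 : ∀ x ∈ Set.Ioi (0 : ℝ), HasDerivAt A' (A'' x) x)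
    (hcont : ContinuousOn A'' (Set.Ioi 0))
    (heq : ∀ x ∈ Set.Ioi (0 : ℝ), A'' x = v x * A x)
    (k : ℝ → ℝ → ℝ)
    (hk : ∀ x t : ℝ, x ≠ t →
      k x t = (A x * A' t - A' x * A t) / (Real.pi * (x - t)))
    (hint : ∀ x ∈ Set.Ioi (0 : ℝ), ∀ t ∈ Set.Ioi (0 : ℝ), x ≠ t →
      MeasureTheory.IntegrableOn
        (fun u => A (u + x) * (v (u + x) - v (u + t)) * A (u + t)) (Set.Ioi 0))
    (hlim : ∀ η : ℝ, η ≠ 0 →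
      Filter.Tendsto (fun ζ => k ((ζ + η) / 2) ((ζ - η) / 2))
        Filter.atTop (nhds 0)) :
    ∀ x ∈ Set.Ioi (0 : ℝ), ∀ t ∈ Set.Ioi (0 : ℝ), x ≠ t →
      k x t = ∫ u in Set.Ioi (0 : ℝ),
        A (u + x) * ((v (u + x) - v (u + t)) / (Real.pi * (x - t))) * A (u + t) := by
  intro x hx t ht hxt
  have hx0 : (0 : ℝ) < x := hx
  have ht0 : (0 : ℝ) < t := ht
  have hsub : x - t ≠ 0 := sub_ne_zero.mpr hxt
  have hπ : Real.pi * (x - t) ≠ 0 := mul_ne_zero Real.pi_ne_zero hsub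
  set F : ℝ → ℝ := fun u => A (u + x) * A' (u + t) - A' (u + x) * A (u + t) with hFdef
  -- derivative of F
  have hFd : ∀ u ∈ Set.Ici (0 : ℝ),
      HasDerivAt F (-(A (u + x) * (v (u + x) - v (u + t)) * A (u + t))) u := by
    intro u hu
    have hu0 : (0 : ℝ) ≤ u := hu
    have hux : u + x ∈ Set.Ioi (0 : ℝ) := by simp only [Set.mem_Ioi]; linarith
    have hut : u + t ∈ Set.Ioi (0 : ℝ) := by simp only [Set.mem_Ioi]; linarith
    have hAx : HasDerivAt (fun u => A (u + x)) (A' (u + x)) u := by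
      simpa [Function.comp_def] using (hderiv1 _ hux).comp u ((hasDerivAt_id u).add_const x)
    have hAt : HasDerivAt (fun u => A (u + t)) (A' (u + t)) u := by
      simpa [Function.comp_def] using (hderiv1 _ hut).comp u ((hasDerivAt_id u).add_const t)
    have hA'x : HasDerivAt (fun u => A' (u + x)) (A'' (u + x)) u := by
      simpa [Function.comp_def] using (hderiv2 _ hux).comp u ((hasDerivAt_id u).add_const x)
    have hA't : HasDerivAt (fun u => A' (u + t)) (A'' (u + t)) u := by
      simpa [Function.comp_def] using (hderiv2 _ hut).comp u ((hasDerivAt_id u).add_const t)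
    have h := (hAx.mul hA't).sub (hA'x.mul hAt)
    refine h.congr_deriv ?_
    rw [heq _ hux, heq _ hut]
    ring
  -- limit of F at infinity
  have hζ : Filter.Tendsto (fun u : ℝ => 2 * u + (x + t)) Filter.atTop Filter.atTop :=
    Filter.tendsto_atTop_add_const_right _ _
      (Filter.Tendsto.const_mul_atTop two_pos Filter.tendsto_id)
  have hkl : Filter.Tendsto (fun u : ℝ => k (u + x) (u + t)) Filter.atTop (nhds 0) := by
    have := (hlim (x - t) hsub).comp hζ
    convert this using 2 with u
    simp only [Function.comp]
    congr 1 <;> ring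
  have hFl : Filter.Tendsto F Filter.atTop (nhds 0) := by
    have h2 : Filter.Tendsto (fun u : ℝ => k (u + x) (u + t) * (Real.pi * (x - t)))
        Filter.atTop (nhds 0) := by
      simpa using hkl.mul_const (Real.pi * (x - t))
    refine h2.congr fun u => ?_
    have hne : u + x ≠ u + t := by intro h; exact hxt (by linarith [add_left_cancel h])
    rw [hk _ _ hne]
    field_simp
    simp only [hFdef]; ring
  -- FTC on the half line
  have hintF : MeasureTheory.IntegrableOn
      (fun u => -(A (u + x) * (v (u + x) - v (u + t)) * A (u + t))) (Set.Ioi 0) :=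
    (hint x hx t ht hxt).neg
  have hFc : ContinuousWithinAt F (Set.Ici 0) 0 :=
    (hFd 0 Set.self_mem_Ici).continuousAt.continuousWithinAt
  have hftc := MeasureTheory.integral_Ioi_of_hasDerivAt_of_tendsto hFc
    (fun u hu => hFd u (Set.mem_Ici.mpr (le_of_lt hu))) hintF hFl
  have hF0 : (∫ u in Set.Ioi (0 : ℝ),
      A (u + x) * (v (u + x) - v (u + t)) * A (u + t)) = F 0 := by
    have := hftc
    rw [MeasureTheory.integral_neg] at this
    linarith
  -- conclude
  have hkx : k x t = F 0 / (Real.pi * (x - t)) := by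
    rw [hk x t hxt]; simp [hFdef]
  calc k x t = (∫ u in Set.Ioi (0 : ℝ),
        A (u + x) * (v (u + x) - v (u + t)) * A (u + t)) * (Real.pi * (x - t))⁻¹ := by
        rw [hkx, hF0, div_eq_mul_inv]
    _ = ∫ u in Set.Ioi (0 : ℝ),
        A (u + x) * ((v (u + x) - v (u + t)) / (Real.pi * (x - t))) * A (u + t) := by
        rw [← MeasureTheory.integral_mul_const]
        congr 1; ext u; field_simp
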